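/- Let (V, h) be a finite-dimensional real inner product space with norm ‖·‖, let W ∈ V with ‖W‖ < 1, and let R be the Randers metric with navigation data (h, W). Let L ⊆ V be a linear subspace, and decompose W = W^⊤ + W^⊥ with W^⊤ ∈ L and W^⊥ ∈ L^⊥ (orthogonal complement with respect to h). Set λ := 1/(1 − ‖W^⊥‖²). Then λ·‖W^⊤‖² < 1 and, for every v ∈ L ∖ {0}, λ · ‖v/R(v) − W^⊤‖² = 1. In other words, the restriction of R to L is the Randers metric on L with navigation data (λ·h|_{L×L}, W^⊤). -/

import Mathlib

lemma pyth_aux {V : Type*} [NormedAddCommGroup V] [InnerProductSpace ℝ V]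
    (a b : V) (h : inner ℝ a b = (0:ℝ)) : ‖a + b‖ ^ 2 = ‖a‖ ^ 2 + ‖b‖ ^ 2 := by
  rw [norm_add_sq_real, h]; ring

/-- The restriction of a Randers metric `R` with navigation data `(h, W)` (mild wind) to a
linear subspace `L` is the Randers metric on `L` with navigation data `(λ·h|_L, W^⊤)`, where
`W = W^⊤ + W^⊥` is the orthogonal decomposition along `L` and `λ = 1/(1 − ‖W^⊥‖²)`:
one has `λ‖W^⊤‖² < 1` and `λ‖v/R(v) − W^⊤‖² = 1` for every `v ∈ L ∖ {0}`. -/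
theorem stmt13 {V : Type*} [NormedAddCommGroup V] [InnerProductSpace ℝ V]
    [FiniteDimensional ℝ V] (W : V) (hW : ‖W‖ < 1) (R : V → ℝ) (hR0 : R 0 = 0)
    (hR : ∀ v : V, v ≠ 0 → 0 < R v ∧ ‖(R v)⁻¹ • v - W‖ = 1)
    (L : Submodule ℝ V) :
    (1 - ‖W - (Submodule.orthogonalProjection L W : V)‖ ^ 2)⁻¹ *
        ‖(Submodule.orthogonalProjection L W : V)‖ ^ 2 < 1 ∧
    ∀ v : V, v ∈ L → v ≠ 0 →
      (1 - ‖W - (Submodule.orthogonalProjection L W : V)‖ ^ 2)⁻¹ *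
        ‖(R v)⁻¹ • v - (Submodule.orthogonalProjection L W : V)‖ ^ 2 = 1 := by
  set P : V := (Submodule.orthogonalProjection L W : V) with hP
  have hPmem : P ∈ L := (Submodule.orthogonalProjection L W).2
  have hWo : W - P ∈ Lᗮ := Submodule.sub_starProjection_mem_orthogonal (K := L) W
  -- Pythagoras: for x ∈ L, ‖x - W‖² = ‖x - P‖² + ‖W - P‖²
  have pyth : ∀ x : V, x ∈ L → ‖x - W‖ ^ 2 = ‖x - P‖ ^ 2 + ‖W - P‖ ^ 2 := by
    intro x hx
    have : x - W = (x - P) + -(W - P) := by abel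
    rw [this, pyth_aux, norm_neg]
    rw [inner_neg_right, neg_eq_zero]
    exact hWo (x - P) (Submodule.sub_mem L hx hPmem)
  have pythW : ‖W‖ ^ 2 = ‖P‖ ^ 2 + ‖W - P‖ ^ 2 := by
    have : W = P + (W - P) := by abel
    nth_rewrite 1 [this]
    exact pyth_aux P (W - P) (hWo P hPmem)
  have hW2 : ‖W‖ ^ 2 < 1 := by
    have := norm_nonneg W
    nlinarith
  have hWo2 : ‖W - P‖ ^ 2 < 1 := by nlinarith [sq_nonneg ‖P‖]
  have hpos : 0 < 1 - ‖W - P‖ ^ 2 := by linarith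
  constructor
  · rw [inv_mul_lt_iff₀ hpos, mul_one]
    linarith
  · intro v hv hv0
    obtain ⟨hRpos, hRnorm⟩ := hR v hv0
    have hmem : (R v)⁻¹ • v ∈ L := Submodule.smul_mem L _ hv
    have := pyth ((R v)⁻¹ • v) hmem
    rw [hRnorm] at this
    have h1 : ‖(R v)⁻¹ • v - P‖ ^ 2 = 1 - ‖W - P‖ ^ 2 := by
      nlinarith
    rw [h1, inv_mul_cancel₀ (ne_of_gt hpos)]
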